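/- Let ρ ∈ (0,1] and let x be a multiplicative seminorm on the Laurent polynomial ring ℂ[t,t^{−1}] such that x(c·1) = |c|^ρ for all c ∈ ℂ and x(t) = e^{−1}. Then there exists a unique a ∈ ℂ with |a| = e^{−1/ρ} such that x(f) = |f(a)|^ρ for every f ∈ ℂ[t,t^{−1}]. -/

import Mathlib

/-- A multiplicative seminorm on a commutative ring `A`. -/
def IsMultSeminorm {A : Type*} [CommRing A] (x : A → ℝ) : Prop :=
  (∀ f, 0 ≤ x f) ∧ x 0 = 0 ∧ x 1 = 1 ∧
    (∀ f g, x (f * g) = x f * x g) ∧ (∀ f g, x (f + g) ≤ x f + x g)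

/-- The coefficients of a Laurent polynomial, as a finitely supported function `ℤ →₀ ℂ`. -/
def lcoeff (f : LaurentPolynomial ℂ) : ℤ →₀ ℂ := AddMonoidAlgebra.coeff f

/-- Evaluation of a Laurent polynomial at `a ∈ ℂ^*`. -/
noncomputable def laurentEvalAt (a : ℂ) (f : LaurentPolynomial ℂ) : ℂ :=
  (lcoeff f).sum fun j c => c * a ^ j

open LaurentPolynomial Filter in
/-- Evaluation agrees with the algebra lift at a nonzero point. -/
lemma laurentEvalAt_eq_lift (a : ℂ) (ha : a ≠ 0) (f : LaurentPolynomial ℂ) :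
    laurentEvalAt a f =
      (AddMonoidAlgebra.lift ℂ ℂ ℤ
        ((Units.coeHom ℂ).comp (zpowersHom ℂˣ (Units.mk0 a ha)))) f := by
  rw [AddMonoidAlgebra.lift_apply]
  refine Finsupp.sum_congr fun j _ => ?_
  simp [smul_eq_mul, Units.val_zpow_eq_zpow_val]

open LaurentPolynomial in
lemma laurentEvalAt_T_sub_C (c b : ℂ) :
    laurentEvalAt c (T 1 - algebraMap ℂ (LaurentPolynomial ℂ) b) = c - b := by
  have h1 : AddMonoidAlgebra.coeff (T 1 - algebraMap ℂ (LaurentPolynomial ℂ) b : LaurentPolynomial ℂ)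
      = ((Finsupp.single 1 1 - Finsupp.single 0 b : ℤ →₀ ℂ) : ℤ →₀ ℂ) := rfl
  unfold laurentEvalAt lcoeff
  rw [h1, Finsupp.sum_sub_index (by intros; rw [sub_mul])]
  rw [Finsupp.sum_single_index (by simp), Finsupp.sum_single_index (by simp)]
  simp

/-- §4 of the paper: for `0 < ρ ≤ 1`, a multiplicative seminorm on `ℂ[t,t^{-1}]`
restricting to `|·|^ρ` on `ℂ` and with `x(t) = e^{-1}` is evaluation at a unique point
`a` of the circle of radius `e^{-1/ρ}`, raised to the power `ρ`. -/
theorem archimedean_fiber_of_Gm_sharp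
    (ρ : ℝ) (hρ : ρ ∈ Set.Ioc (0 : ℝ) 1)
    (x : LaurentPolynomial ℂ → ℝ) (hx : IsMultSeminorm x)
    (hres : ∀ c : ℂ, x (algebraMap ℂ (LaurentPolynomial ℂ) c) = ‖c‖ ^ ρ)
    (ht : x (LaurentPolynomial.T 1) = Real.exp (-1)) :
    ∃! a : ℂ, ‖a‖ = Real.exp (-1 / ρ) ∧
      ∀ f : LaurentPolynomial ℂ, x f = ‖laurentEvalAt a f‖ ^ ρ := by
  classical
  open LaurentPolynomial Polynomial Filter in
  obtain ⟨hρ0, hρ1⟩ := hρ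
  obtain ⟨hpos, hx0, hx1, hmul, hadd⟩ := hx
  set Cm : ℂ →+* LaurentPolynomial ℂ := LaurentPolynomial.C with hCmdef
  have hCalg : ∀ c : ℂ, algebraMap ℂ (LaurentPolynomial ℂ) c = Cm c := fun _ => rfl
  have hres' : ∀ c : ℂ, x (Cm c) = ‖c‖ ^ ρ := fun c => by
    rw [← hCalg]; exact hres c
  -- basic consequences
  have hxneg : ∀ f, x (-f) = x f := by
    intro f
    have e : -f = Cm (-1) * f := by simp
    rw [e, hmul, hres']
    simp
  have htri : ∀ f g, x f ≤ x g + x (f - g) := by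
    intro f g
    have h := hadd g (f - g)
    have e : g + (f - g) = f := by ring
    rwa [e] at h
  have habs_sub : ∀ f g, |x f - x g| ≤ x (f - g) := by
    intro f g
    rw [abs_sub_le_iff]
    constructor
    · linarith [htri f g]
    · have h := htri g f
      have e : g - f = -(f - g) := by ring
      rw [e, hxneg] at h
      linarith
  have hsub_le : ∀ f g, x (f - g) ≤ x f + x g := by
    intro f g
    have h := hadd f (-g)
    rw [hxneg] at h
    rwa [sub_eq_add_neg]
  have hxpow : ∀ f (n : ℕ), x (f ^ n) = x f ^ n := by
    intro f n
    induction n with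
    | zero => simpa using hx1
    | succ n ih => rw [pow_succ, pow_succ, hmul, ih]
  have hxprod : ∀ (n : ℕ) (g : ℕ → LaurentPolynomial ℂ),
      x (∏ i ∈ Finset.range n, g i) = ∏ i ∈ Finset.range n, x (g i) := by
    intro n g
    induction n with
    | zero => simpa using hx1
    | succ n ih => rw [Finset.prod_range_succ, Finset.prod_range_succ, hmul, ih]
  -- the distance function
  set φ : ℂ → ℝ := fun b => x (T 1 - Cm b) with hφdef
  have hφ_lip : ∀ b c : ℂ, |φ b - φ c| ≤ ‖b - c‖ ^ ρ := by
    intro b c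
    have h := habs_sub (T 1 - Cm b) (T 1 - Cm c)
    have e : (T 1 - Cm b) - (T 1 - Cm c) = Cm (c - b) := by
      rw [map_sub]; ring
    rw [e, hres', norm_sub_rev] at h
    exact h
  have hφ_cont : Continuous φ := by
    rw [Metric.continuous_iff]
    intro b ε hε
    refine ⟨ε ^ (1/ρ), Real.rpow_pos_of_pos hε _, fun c hc => ?_⟩
    have h1 : ‖c - b‖ < ε ^ (1/ρ) := by rwa [Complex.dist_eq] at hc
    have h2 : ‖c - b‖ ^ ρ < (ε ^ (1/ρ)) ^ ρ :=
      Real.rpow_lt_rpow (norm_nonneg _) h1 hρ0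
    have h3 : (ε ^ (1/ρ) : ℝ) ^ ρ = ε := by
      rw [← Real.rpow_mul hε.le, one_div_mul_cancel hρ0.ne', Real.rpow_one]
    calc dist (φ c) (φ b) = |φ c - φ b| := Real.dist_eq _ _
      _ ≤ ‖c - b‖ ^ ρ := hφ_lip c b
      _ < ε := by rw [← h3]; exact h2
  -- coercivity and existence of a minimum
  have hφ_lb : ∀ b : ℂ, ‖b‖ ^ ρ + -Real.exp (-1) ≤ φ b := by
    intro b
    have h := habs_sub (Cm b) (T 1)
    have e : Cm b - T 1 = -(T 1 - Cm b) := by ring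
    rw [e, hxneg, hres', ht] at h
    have h2 := le_abs_self (‖b‖ ^ ρ - Real.exp (-1))
    have : φ b = x (T 1 - Cm b) := rfl
    linarith [h2.trans h]
  have hφ_coer : Tendsto φ (cocompact ℂ) atTop := by
    have h0 : Tendsto (fun b : ℂ => ‖b‖) (cocompact ℂ) atTop := by
      exact tendsto_norm_cocompact_atTop (E := ℂ)
    have h1 : Tendsto (fun b : ℂ => ‖b‖ ^ ρ) (cocompact ℂ) atTop :=
      (tendsto_rpow_atTop hρ0).comp h0
    exact tendsto_atTop_mono hφ_lb (tendsto_atTop_add_const_right _ _ h1)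
  obtain ⟨a, hmin⟩ := hφ_cont.exists_forall_le hφ_coer
  set m := φ a with hmdef
  have hm_nonneg : 0 ≤ m := hpos _
  -- the minimum value is zero
  have hm : m = 0 := by
    by_contra hm'
    have hm0 : 0 < m := lt_of_le_of_ne hm_nonneg (Ne.symm hm')
    have key : ∀ b : ℂ, φ b = m → ∀ d : ℂ, ‖d‖ ^ ρ < m → φ (b + d) = m := by
      intro b hb d hd
      refine le_antisymm ?_ (hmin _)
      set q := ‖d‖ ^ ρ with hqdef
      have hq0 : 0 ≤ q := Real.rpow_nonneg (norm_nonneg _) _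
      have hqpow : ∀ nn : ℕ, (‖d ^ nn‖) ^ ρ = q ^ nn := by
        intro nn
        rw [norm_pow, ← Real.rpow_natCast (‖d‖) nn, ← Real.rpow_mul (norm_nonneg _),
          mul_comm, Real.rpow_mul (norm_nonneg _), Real.rpow_natCast]
      have hfac : ∀ c : ℂ, (T 1 - Cm b) - Cm c = T 1 - Cm (b + c) := by
        intro c; rw [map_add]; ring
      have main : ∀ k : ℕ, φ (b + d) * m ^ k ≤ m ^ (k+1) + q ^ (k+1) := by
        intro k
        set n := k + 1 with hndef
        have hn : 0 < n := Nat.succ_pos k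
        have hζ := Complex.isPrimitiveRoot_exp n hn.ne'
        set ζ : ℂ := Complex.exp (2 * Real.pi * Complex.I / n) with hζdef
        have hid : (X ^ n - Polynomial.C (d ^ n) : Polynomial ℂ)
            = ∏ i ∈ Finset.range n, (X - Polynomial.C (ζ ^ i * d)) :=
          X_pow_sub_C_eq_prod hζ hn rfl
        have hid2 : (T 1 - Cm b) ^ n - Cm (d ^ n)
            = ∏ i ∈ Finset.range n, (T 1 - Cm (b + ζ ^ i * d)) := by
          have h := congrArg (Polynomial.aeval (T 1 - Cm b)) hid
          simp only [map_sub, map_pow, map_prod, Polynomial.aeval_X, Polynomial.aeval_C] at h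
          simp only [hCalg] at h
          rw [← map_pow Cm d n] at h
          rw [h]
          exact Finset.prod_congr rfl fun i _ => hfac _
        have hprodval : x ((T 1 - Cm b) ^ n - Cm (d ^ n))
            = φ (b + d) * ∏ i ∈ Finset.range k, φ (b + ζ ^ (i+1) * d) := by
          rw [hid2, hxprod, Finset.prod_range_succ']
          have e0 : (b + ζ ^ 0 * d) = b + d := by rw [pow_zero, one_mul]
          rw [e0, mul_comm]
        have hlow : m ^ k ≤ ∏ i ∈ Finset.range k, φ (b + ζ ^ (i+1) * d) := by
          calc m ^ k = ∏ _i ∈ Finset.range k, m := by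
                rw [Finset.prod_const, Finset.card_range]
            _ ≤ _ := Finset.prod_le_prod (fun _ _ => hm_nonneg) (fun i _ => hmin _)
        have hup : x ((T 1 - Cm b) ^ n - Cm (d ^ n)) ≤ m ^ n + q ^ n := by
          have h := hsub_le ((T 1 - Cm b) ^ n) (Cm (d ^ n))
          rw [hxpow, hres', hqpow] at h
          have : x (T 1 - Cm b) = m := hb
          rw [this] at h
          exact h
        calc φ (b + d) * m ^ k ≤ φ (b + d) * ∏ i ∈ Finset.range k, φ (b + ζ ^ (i+1) * d) :=
              mul_le_mul_of_nonneg_left hlow (hpos _)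
          _ = x ((T 1 - Cm b) ^ n - Cm (d ^ n)) := hprodval.symm
          _ ≤ m ^ n + q ^ n := hup
      have hlim : Tendsto (fun k : ℕ => m + q * (q/m)^k) atTop (nhds m) := by
        have h1 : Tendsto (fun k : ℕ => (q/m)^k) atTop (nhds 0) :=
          tendsto_pow_atTop_nhds_zero_of_lt_one (div_nonneg hq0 hm0.le) ((div_lt_one hm0).mpr hd)
        have h2 := (h1.const_mul q).const_add m
        simpa using h2
      refine ge_of_tendsto hlim (Eventually.of_forall fun k => ?_)
      have hmk : (0:ℝ) < m ^ k := pow_pos hm0 k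
      calc φ (b + d) ≤ (m ^ (k+1) + q ^ (k+1)) / m ^ k := (le_div_iff₀ hmk).mpr (main k)
        _ = m + q * (q/m)^k := by
            rw [div_pow]
            field_simp
            ring
    have hSopen : IsOpen {b : ℂ | φ b = m} := by
      rw [Metric.isOpen_iff]
      intro b hb
      refine ⟨m ^ (1/ρ), Real.rpow_pos_of_pos hm0 _, fun c hc => ?_⟩
      have h1 : ‖c - b‖ < m ^ (1/ρ) := by rwa [Metric.mem_ball, Complex.dist_eq] at hc
      have h2 : ‖c - b‖ ^ ρ < (m ^ (1/ρ)) ^ ρ :=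
        Real.rpow_lt_rpow (norm_nonneg _) h1 hρ0
      have h3 : (m ^ (1/ρ) : ℝ) ^ ρ = m := by
        rw [← Real.rpow_mul hm0.le, one_div_mul_cancel hρ0.ne', Real.rpow_one]
      rw [h3] at h2
      have h4 := key b hb (c - b) h2
      simpa using h4
    have hSclosed : IsClosed {b : ℂ | φ b = m} := isClosed_eq hφ_cont continuous_const
    have hSuniv : {b : ℂ | φ b = m} = Set.univ :=
      IsClopen.eq_univ ⟨hSclosed, hSopen⟩ ⟨a, rfl⟩
    obtain ⟨b, hb⟩ := (hφ_coer.eventually_ge_atTop (m + 1)).exists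
    have hbm : φ b = m := Set.eq_univ_iff_forall.mp hSuniv b
    linarith
  -- `a` is nonzero of the right modulus
  have hker : x (T 1 - Cm a) = 0 := hm
  have haT : ‖a‖ ^ ρ = Real.exp (-1) := by
    have h := habs_sub (Cm a) (T 1)
    have e : Cm a - T 1 = -(T 1 - Cm a) := by ring
    rw [e, hxneg, hker, hres', ht] at h
    have h2 := abs_nonneg (‖a‖ ^ ρ - Real.exp (-1))
    have h3 : |‖a‖ ^ ρ - Real.exp (-1)| = 0 := le_antisymm h h2
    have h4 := abs_eq_zero.mp h3
    linarith [sub_eq_zero.mp h4]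
  have ha_ne : a ≠ 0 := by
    intro hz
    rw [hz] at haT
    simp only [norm_zero] at haT
    rw [Real.zero_rpow hρ0.ne'] at haT
    exact (Real.exp_pos _).ne' haT.symm
  have habs : ‖a‖ = Real.exp (-1/ρ) := by
    have h1 : (‖a‖ ^ ρ) ^ (1/ρ) = Real.exp (-1) ^ (1/ρ) := by rw [haT]
    rw [← Real.rpow_mul (norm_nonneg _), mul_one_div_cancel hρ0.ne',
      Real.rpow_one, ← Real.exp_mul] at h1
    rw [h1]
    congr 1
    ring
  -- the evaluation algebra homomorphism at `a`
  set E : LaurentPolynomial ℂ →ₐ[ℂ] ℂ :=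
    AddMonoidAlgebra.lift ℂ ℂ ℤ ((Units.coeHom ℂ).comp (zpowersHom ℂˣ (Units.mk0 a ha_ne)))
    with hEdef
  have hEeval : ∀ f, laurentEvalAt a f = E f := laurentEvalAt_eq_lift a ha_ne
  have hE_T : ∀ k : ℤ, E (T k) = a ^ k := by
    intro k
    have h1 : (T k : LaurentPolynomial ℂ) = AddMonoidAlgebra.single k 1 := rfl
    rw [h1, hEdef, AddMonoidAlgebra.lift_single]
    simp [Units.val_zpow_eq_zpow_val]
  have hxT : ∀ k : ℕ, x (T (k:ℤ)) = Real.exp (-(k:ℝ)) := by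
    intro k
    induction k with
    | zero => simpa using hx1
    | succ k ih =>
      have e : ((k+1 : ℕ) : ℤ) = (k : ℤ) + 1 := by push_cast; ring
      rw [e, T_add, hmul, ih, ht, ← Real.exp_add]
      congr 1
      push_cast
      ring
  -- value on ordinary polynomials
  have hpoly : ∀ p : Polynomial ℂ, x (p.toLaurent) = ‖p.eval a‖ ^ ρ := by
    intro p
    obtain ⟨q, hq⟩ := Polynomial.X_sub_C_dvd_sub_C_eval (a := a) (p := p)
    have h2 : p.toLaurent - Cm (p.eval a) = (T 1 - Cm a) * q.toLaurent := by
      have h := congrArg Polynomial.toLaurent hq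
      simp only [map_sub, map_mul, Polynomial.toLaurent_C, Polynomial.toLaurent_X] at h
      exact h
    have h3 : x (p.toLaurent - Cm (p.eval a)) = 0 := by
      rw [h2, hmul, hker, zero_mul]
    have h4 := habs_sub p.toLaurent (Cm (p.eval a))
    rw [h3, hres'] at h4
    have h5 := abs_nonneg (x p.toLaurent - ‖p.eval a‖ ^ ρ)
    have h6 := abs_eq_zero.mp (le_antisymm h4 h5)
    linarith [sub_eq_zero.mp h6]
  have hEpoly : ∀ p : Polynomial ℂ, E (p.toLaurent) = p.eval a := by
    have hcomp : E.comp Polynomial.toLaurentAlg = Polynomial.aeval a := by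
      apply Polynomial.algHom_ext
      rw [AlgHom.comp_apply, Polynomial.toLaurentAlg_apply, Polynomial.toLaurent_X,
        Polynomial.aeval_X, hE_T, zpow_one]
    intro p
    have h := DFunLike.congr_fun hcomp p
    rw [AlgHom.comp_apply, Polynomial.toLaurentAlg_apply] at h
    rw [h]
    simp [Polynomial.aeval_def, Polynomial.eval₂_eq_eval_map, Algebra.algebraMap_self]
  -- the main formula
  have hmain : ∀ f, x f = ‖E f‖ ^ ρ := by
    intro f
    obtain ⟨n, p, hp⟩ := LaurentPolynomial.exists_T_pow f
    have hx1' : x f * Real.exp (-(n:ℝ)) = ‖p.eval a‖ ^ ρ := by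
      rw [← hpoly p, hp, hmul, hxT]
    have hE1 : E f * a ^ (n:ℤ) = p.eval a := by
      rw [← hEpoly p, hp, map_mul, hE_T]
    have habsE : ‖p.eval a‖ = ‖E f‖ * Real.exp (-(n:ℝ)/ρ) := by
      rw [← hE1, norm_mul, norm_zpow, habs, ← Real.rpow_intCast (Real.exp (-1/ρ)) n,
        ← Real.exp_mul]
      congr 1
      push_cast
      ring
    rw [habsE, Real.mul_rpow (norm_nonneg _) (Real.exp_pos _).le,
      ← Real.exp_mul] at hx1'
    have e2 : -(n:ℝ)/ρ * ρ = -(n:ℝ) := by field_simp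
    rw [e2] at hx1'
    exact mul_right_cancel₀ (Real.exp_pos _).ne' hx1'
  -- conclusion
  refine ⟨a, ⟨habs, fun f => by rw [hEeval, hmain]⟩, ?_⟩
  rintro a' ⟨_, ha'2⟩
  have h1 := ha'2 (T 1 - Cm a)
  rw [hker, show (Cm a) = algebraMap ℂ (LaurentPolynomial ℂ) a from rfl,
    laurentEvalAt_T_sub_C] at h1
  have h2 : ‖a' - a‖ = 0 := by
    by_contra hne
    have hpos' : 0 < ‖a' - a‖ := lt_of_le_of_ne (norm_nonneg _) (Ne.symm hne)
    exact (Real.rpow_pos_of_pos hpos' ρ).ne' h1.symm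
  have h3 : a' - a = 0 := by
    rwa [norm_eq_zero] at h2
  exact sub_eq_zero.mp h3
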